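/- arXiv:1108.3494 — 2 statements merged into one kernel-verified Lean document; each statement's English description precedes it below -/
import Mathlib

section
/- For every natural number k ≥ 1, let n = 4k+2 and for j ∈ [2k+1] let P_j be the pattern on {0,1}^n requiring x_{2j-1} = x_{2j} = 1 and, for all i ∈ [k], x_{2j+2i} = 0 and x_{2j-2i-1} = x_{2j-2i} = 0 (indices modulo n). Then for any j ≠ j' in [2k+1], any y ∈ {0,1}^n satisfying P_j, and any z ∈ {0,1}^n satisfying P_{j'}, the Hamming distance between y and z is at least 3. -/
section Defs

variable {ι : Type} [Fintype ι] [DecidableEq ι]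

/-- `flipBit x i` is `x` with its `i`-th bit flipped. -/
def flipBit (x : ι → Bool) (i : ι) : ι → Bool :=
  Function.update x i (!x i)

/-- `flipBlock x B` is `x` with all bits indexed by `B` flipped. -/
def flipBlock (x : ι → Bool) (B : Finset ι) : ι → Bool :=
  fun j => if j ∈ B then !x j else x j

/-- The sensitivity of `f` at `x`: the number of `i` with `f (x^(i)) ≠ f x`. -/
def sensAt (f : (ι → Bool) → Bool) (x : ι → Bool) : ℕ :=
  (Finset.univ.filter fun i => f (flipBit x i) ≠ f x).card

/-- The sensitivity `s(f) = max_x s(f,x)`. -/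
def sens (f : (ι → Bool) → Bool) : ℕ :=
  Finset.univ.sup (sensAt f)

/-- The 0-sensitivity `s₀(f) = max_{x : f x = 0} s(f,x)`. -/
def sens0 (f : (ι → Bool) → Bool) : ℕ :=
  (Finset.univ.filter fun x => f x = false).sup (sensAt f)

/-- The 1-sensitivity `s₁(f) = max_{x : f x = 1} s(f,x)`. -/
def sens1 (f : (ι → Bool) → Bool) : ℕ :=
  (Finset.univ.filter fun x => f x = true).sup (sensAt f)

/-- The block sensitivity of `f` at `x`: the largest `b` such that there are
`b` pairwise disjoint blocks on which flipping `x` changes the value of `f`. -/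
noncomputable def bsAt (f : (ι → Bool) → Bool) (x : ι → Bool) : ℕ :=
  sSup {b : ℕ | ∃ Bl : Fin b → Finset ι,
    (Pairwise fun p q => Disjoint (Bl p) (Bl q)) ∧
    ∀ p, f (flipBlock x (Bl p)) ≠ f x}

/-- The block sensitivity `bs(f) = max_x bs(f,x)`. -/
noncomputable def bs (f : (ι → Bool) → Bool) : ℕ :=
  Finset.univ.sup (bsAt f)

/-- The 0-block-sensitivity `bs₀(f) = max_{x : f x = 0} bs(f,x)`. -/
noncomputable def bs0 (f : (ι → Bool) → Bool) : ℕ :=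
  (Finset.univ.filter fun x => f x = false).sup (bsAt f)

end Defs

/-- The coordinate of `{0,1}^{4k+2}` with (1-based) index `t`, taken modulo `4k+2`. -/
def pidx (k : ℕ) (t : ℤ) : Fin (4*k+2) :=
  ⟨(t % (4*(k:ℤ)+2)).toNat, by
    have h0 : (0:ℤ) < 4*(k:ℤ)+2 := by positivity
    have h1 := Int.emod_nonneg t (ne_of_gt h0)
    have h2 := Int.emod_lt_of_pos t h0
    omega⟩

/-- `x` satisfies the pattern `P_j`: `x_{2j-1} = x_{2j} = 1` and, for all `i ∈ [k]`,
`x_{2j+2i} = 0` and `x_{2j-2i-1} = x_{2j-2i} = 0`, indices taken modulo `4k+2`. -/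
def SatPat (k : ℕ) (j : ℤ) (x : Fin (4*k+2) → Bool) : Prop :=
  x (pidx k (2*j-1)) = true ∧ x (pidx k (2*j)) = true ∧
  ∀ i : ℤ, 1 ≤ i → i ≤ (k:ℤ) →
    x (pidx k (2*j+2*i)) = false ∧
    x (pidx k (2*j-2*i-1)) = false ∧
    x (pidx k (2*j-2*i)) = false

/-- The Hamming distance between `y` and `z`: the number of coordinates where they differ. -/
def hammingDist' {ι : Type} [Fintype ι] [DecidableEq ι] (y z : ι → Bool) : ℕ :=
  (Finset.univ.filter fun i => y i ≠ z i).card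

lemma pidx_eq_iff (k : ℕ) (t s : ℤ) :
    pidx k t = pidx k s ↔ (4*(k:ℤ)+2) ∣ (t - s) := by
  have h0 : (0:ℤ) < 4*(k:ℤ)+2 := by positivity
  have h1 := Int.emod_nonneg t (ne_of_gt h0)
  have h2 := Int.emod_nonneg s (ne_of_gt h0)
  unfold pidx
  rw [Fin.mk.injEq]
  constructor
  · intro h
    have hmod : t % (4*(k:ℤ)+2) = s % (4*(k:ℤ)+2) := by omega
    have : (4*(k:ℤ)+2) ∣ (s - t) := Int.ModEq.dvd hmod
    rw [show t - s = -(s - t) by ring]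
    exact dvd_neg.mpr this
  · intro h
    have hmod : s ≡ t [ZMOD (4*(k:ℤ)+2)] := Int.modEq_iff_dvd.mpr h
    have : t % (4*(k:ℤ)+2) = s % (4*(k:ℤ)+2) := hmod.symm
    omega

lemma pidx_eq_of_sub (k : ℕ) {t s : ℤ} (c : ℤ) (h : t - s = (4*(k:ℤ)+2) * c) :
    pidx k t = pidx k s := (pidx_eq_iff k t s).mpr ⟨c, h⟩

lemma pidx_ne_of_bounds (k : ℕ) {t s : ℤ} (h1 : -(4*(k:ℤ)+2) < t - s)
    (h2 : t - s < 4*(k:ℤ)+2) (h3 : t - s ≠ 0) : pidx k t ≠ pidx k s := by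
  intro h
  obtain ⟨c, hc⟩ := (pidx_eq_iff k t s).mp h
  rcases lt_trichotomy c 0 with hcc | hcc | hcc
  · nlinarith
  · subst hcc; simp at hc; omega
  · nlinarith

lemma pidx_ne_of_odd (k : ℕ) {t s : ℤ} (h3 : ¬ (2:ℤ) ∣ (t - s)) :
    pidx k t ≠ pidx k s := by
  intro h
  obtain ⟨c, hc⟩ := (pidx_eq_iff k t s).mp h
  exact h3 ⟨(2*(k:ℤ)+1) * c, by linarith [hc, mul_assoc (2:ℤ) ((2:ℤ)*(k:ℤ)+1) c]⟩

lemma three_le_hamming {ι : Type} [Fintype ι] [DecidableEq ι] {y z : ι → Bool}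
    {a b c : ι} (hab : a ≠ b) (hac : a ≠ c) (hbc : b ≠ c)
    (ha : y a ≠ z a) (hb : y b ≠ z b) (hc : y c ≠ z c) :
    3 ≤ hammingDist' y z := by
  have hsub : ({a, b, c} : Finset ι) ⊆ Finset.univ.filter fun i => y i ≠ z i := by
    intro i hi
    simp only [Finset.mem_insert, Finset.mem_singleton] at hi
    rcases hi with rfl | rfl | rfl <;> simp [ha, hb, hc]
  have hcard := Finset.card_le_card hsub
  have h3 : ({a, b, c} : Finset ι).card = 3 := by
    rw [Finset.card_insert_of_notMem (by simp [hab, hac]),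
      Finset.card_insert_of_notMem (by simp [hbc]), Finset.card_singleton]
  unfold hammingDist'
  omega

lemma hamming_comm {ι : Type} [Fintype ι] [DecidableEq ι] (y z : ι → Bool) :
    hammingDist' y z = hammingDist' z y := by
  unfold hammingDist'
  congr 1
  apply Finset.filter_congr
  intro i _
  simp [ne_comm]

lemma pattern_hamming_lt (k : ℕ) (hk : 1 ≤ k) (j j' : ℤ)
    (hj1 : 1 ≤ j) (hj'2 : j' ≤ 2*(k:ℤ)+1)
    (hlt : j < j') (y z : Fin (4*k+2) → Bool)
    (hy : SatPat k j y) (hz : SatPat k j' z) :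
    3 ≤ hammingDist' y z := by
  set e : ℤ := j' - j with he
  have he1 : 1 ≤ e := by omega
  have he2 : e ≤ 2*(k:ℤ) := by omega
  rcases le_or_gt e (k:ℤ) with hek | hek
  · -- conflicts at 2j-1, 2j, 2j'
    obtain ⟨hz1, hz2, hz3⟩ := hz.2.2 e he1 hek
    obtain ⟨hy1, _, _⟩ := hy.2.2 e he1 hek
    apply three_le_hamming (a := pidx k (2*j-1)) (b := pidx k (2*j)) (c := pidx k (2*j'))
      (y := y) (z := z)
    · exact pidx_ne_of_odd k (by omega)
    · exact pidx_ne_of_odd k (by omega)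
    · exact pidx_ne_of_bounds k (by omega) (by omega) (by omega)
    · rw [hy.1, show pidx k (2*j-1) = pidx k (2*j'-2*e-1) by apply pidx_eq_of_sub k 0; ring_nf; omega,
        hz2]
      simp
    · rw [hy.2.1, show pidx k (2*j) = pidx k (2*j'-2*e) by apply pidx_eq_of_sub k 0; ring_nf; omega,
        hz3]
      simp
    · rw [hz.2.1, show pidx k (2*j') = pidx k (2*j+2*e) by apply pidx_eq_of_sub k 0; ring_nf; omega,
        hy1]
      simp
  · -- e ≥ k+1 : use i = 2k+1-e ; conflicts at 2j'-1, 2j', 2j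
    set i : ℤ := 2*(k:ℤ)+1-e with hi
    have hi1 : 1 ≤ i := by omega
    have hi2 : i ≤ (k:ℤ) := by omega
    obtain ⟨_, hy2, hy3⟩ := hy.2.2 i hi1 hi2
    obtain ⟨hz1, _, _⟩ := hz.2.2 i hi1 hi2
    apply three_le_hamming (a := pidx k (2*j'-1)) (b := pidx k (2*j')) (c := pidx k (2*j))
      (y := y) (z := z)
    · exact pidx_ne_of_odd k (by omega)
    · exact pidx_ne_of_odd k (by omega)
    · exact pidx_ne_of_bounds k (by omega) (by omega) (by omega)
    · rw [hz.1, show pidx k (2*j'-1) = pidx k (2*j-2*i-1) by apply pidx_eq_of_sub k 1; ring_nf; omega,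
        hy2]
      simp
    · rw [hz.2.1, show pidx k (2*j') = pidx k (2*j-2*i) by apply pidx_eq_of_sub k 1; ring_nf; omega,
        hy3]
      simp
    · rw [hy.2.1, show pidx k (2*j) = pidx k (2*j'+2*i) by apply pidx_eq_of_sub k (-1); ring_nf; omega,
        hz1]
      simp

/-- For `k ≥ 1` and distinct `j, j' ∈ [2k+1]`, any `y` satisfying pattern `P_j`
and any `z` satisfying pattern `P_{j'}` are at Hamming distance at least 3. -/
theorem pattern_hamming_distance (k : ℕ) (hk : 1 ≤ k) (j j' : ℤ)
    (hj1 : 1 ≤ j) (hj2 : j ≤ 2*(k:ℤ)+1) (hj'1 : 1 ≤ j') (hj'2 : j' ≤ 2*(k:ℤ)+1)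
    (hne : j ≠ j') (y z : Fin (4*k+2) → Bool)
    (hy : SatPat k j y) (hz : SatPat k j' z) :
    3 ≤ hammingDist' y z := by
  rcases lt_or_gt_of_ne hne with h | h
  · exact pattern_hamming_lt k hk j j' hj1 hj'2 h y z hy hz
  · rw [hamming_comm]
    exact pattern_hamming_lt k hk j' j hj'1 hj2 h z y hz hy
end

section
/- Let g : {0,1}^m → {0,1} be a Boolean function with s_0(g) = 1, and let f be the OR of n = s_1(g) disjoint copies of g, i.e., f(x_{1,1},…,x_{n,m}) = ⋁_{i=1}^{n} g(x_{i,1},…,x_{i,m}). Then bs_0(f) = s_1(g) · bs_0(g) ≤ s_1(g) · ((2/3)·s_1(g) + 1). -/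
set_option linter.unusedSectionVars false
set_option maxHeartbeats 1000000

section A
variable {ι : Type} [Fintype ι] [DecidableEq ι]
lemma flipBlock_empty (x : ι → Bool) : flipBlock x ∅ = x := by
  funext j; simp [flipBlock]
lemma flipBit_flipBlock_notMem (x : ι → Bool) {S : Finset ι} {i : ι} (h : i ∉ S) :
    flipBit (flipBlock x S) i = flipBlock x (insert i S) := by
  funext j
  by_cases hj : j = i
  · subst hj; simp [flipBit, flipBlock, Function.update, h]
  · simp [flipBit, flipBlock, Function.update, hj, Finset.mem_insert, hj]
lemma flipBit_flipBlock_mem (x : ι → Bool) {S : Finset ι} {i : ι} (h : i ∈ S) :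
    flipBit (flipBlock x S) i = flipBlock x (S.erase i) := by
  funext j
  by_cases hj : j = i
  · subst hj; simp [flipBit, flipBlock, Function.update, h]
  · simp [flipBit, flipBlock, Function.update, hj, Finset.mem_erase, hj]
variable (g : (ι → Bool) → Bool)
lemma unique_dir (hR : ∀ z, g z = false → sensAt g z ≤ 1) {z : ι → Bool}
    (hz : g z = false) {i j : ι} (hi : g (flipBit z i) = true) (hj : g (flipBit z j) = true) :
    i = j := by
  by_contra hne
  have h2 : 2 ≤ (Finset.univ.filter fun k => g (flipBit z k) ≠ g z).card := by
    apply Finset.one_lt_card.mpr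
    exact ⟨i, by simp [hz, hi], j, by simp [hz, hj], hne⟩
  have := hR z hz
  unfold sensAt at this
  omega
def MinBlock (x : ι → Bool) (B : Finset ι) : Prop :=
  g (flipBlock x B) = true ∧ ∀ S ⊂ B, g (flipBlock x S) = false
end A

section C
variable {ι : Type} [Fintype ι] [DecidableEq ι] (g : (ι → Bool) → Bool) (x : ι → Bool)
variable {B C : Finset ι}

lemma chainZ (hR : ∀ z, g z = false → sensAt g z ≤ 1) (hB : MinBlock g x B) (hd : Disjoint B C) :
    ∀ S : Finset ι, S ⊆ C → (∀ u ∈ S, g (flipBlock x (insert u B)) = true) →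
      g (flipBlock x (B ∪ S)) = true := by
  intro S
  induction S using Finset.strongInduction with
  | _ S ih =>
    intro hSC hmiss
    rcases S.eq_empty_or_nonempty with rfl | hne
    · simpa using hB.1
    · by_cases hone : S.card = 1
      · obtain ⟨u, rfl⟩ := Finset.card_eq_one.mp hone
        have : B ∪ {u} = insert u B := by
          ext j; simp [Finset.mem_insert, or_comm]
        rw [this]; exact hmiss u (Finset.mem_singleton_self u)
      · have h2 : 1 < S.card := by
          have := Finset.card_pos.mpr hne; omega
        obtain ⟨u, hu, u', hu', hne'⟩ := Finset.one_lt_card.mp h2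
        by_contra hcon
        have hq : g (flipBlock x (B ∪ S)) = false := by
          revert hcon; cases g (flipBlock x (B ∪ S)) <;> simp
        have notB : ∀ {v : ι}, v ∈ S → v ∉ B := fun hv =>
          Finset.disjoint_right.mp hd (hSC hv)
        have key : ∀ v ∈ S, g (flipBit (flipBlock x (B ∪ S)) v) = true := by
          intro v hv
          rw [flipBit_flipBlock_mem x (Finset.mem_union_right B hv),
              Finset.erase_union_distrib, Finset.erase_eq_of_notMem (notB hv)]
          exact ih (S.erase v) (Finset.erase_ssubset hv)
            ((S.erase_subset v).trans hSC)
            (fun w hw => hmiss w (S.erase_subset v hw))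
        exact hne' (unique_dir g hR hq (key u hu) (key u' hu'))

lemma chainW (hR : ∀ z, g z = false → sensAt g z ≤ 1) (hB : MinBlock g x B) (hd : Disjoint B C) {h : ι} (hhC : h ∈ C)
    (hhit : g (flipBlock x (insert h B)) = false) :
    ∀ S : Finset ι, S ⊆ C → (∀ u ∈ S, g (flipBlock x (insert u B)) = true) → h ∉ S →
      g (flipBlock x (insert h (B ∪ S))) = false := by
  intro S
  induction S using Finset.strongInduction with
  | _ S ih =>
    intro hSC hmiss hhS
    rcases S.eq_empty_or_nonempty with rfl | hne
    · simpa using hhit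
    · obtain ⟨u, hu⟩ := hne
      have hhB : h ∉ B := Finset.disjoint_right.mp hd hhC
      have huB : u ∉ B := Finset.disjoint_right.mp hd (hSC hu)
      have hq : g (flipBlock x (insert h (B ∪ S.erase u))) = false :=
        ih (S.erase u) (Finset.erase_ssubset hu) ((S.erase_subset u).trans hSC)
          (fun w hw => hmiss w (S.erase_subset u hw))
          (fun hc => hhS (S.erase_subset u hc))
      have hhq : h ∉ B ∪ S.erase u := by
        simp only [Finset.mem_union, Finset.mem_erase]
        rintro (hc | ⟨-, hc⟩) <;> [exact hhB hc; exact hhS hc]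
      have h1 : g (flipBit (flipBlock x (insert h (B ∪ S.erase u))) h) = true := by
        rw [flipBit_flipBlock_mem x (Finset.mem_insert_self h _),
            Finset.erase_insert hhq]
        exact chainZ g x hR hB hd (S.erase u) ((S.erase_subset u).trans hSC)
          (fun w hw => hmiss w (S.erase_subset u hw))
      by_contra hcon
      have htrue : g (flipBlock x (insert h (B ∪ S))) = true := by
        revert hcon; cases g (flipBlock x (insert h (B ∪ S))) <;> simp
      have huq : u ∉ insert h (B ∪ S.erase u) := by
        simp only [Finset.mem_insert, Finset.mem_union, Finset.mem_erase]
        rintro (hc | hc | ⟨hc, -⟩)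
        · exact hhS (hc ▸ hu)
        · exact huB hc
        · exact hc rfl
      have h2 : g (flipBit (flipBlock x (insert h (B ∪ S.erase u))) u) = true := by
        rw [flipBit_flipBlock_notMem x huq]
        have : insert u (insert h (B ∪ S.erase u)) = insert h (B ∪ S) := by
          ext j
          simp only [Finset.mem_insert, Finset.mem_union, Finset.mem_erase]
          by_cases hj : j = u
          · subst hj; simp [hu]
          · simp [hj]; try tauto
        rw [this]; exact htrue
      have : u = h := unique_dir g hR hq h2 h1
      exact hhS (this ▸ hu)

lemma chainW2 (hR : ∀ z, g z = false → sensAt g z ≤ 1) (hB : MinBlock g x B) (hd : Disjoint B C) {h₁ h₂ : ι} (h1C : h₁ ∈ C)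
    (h2C : h₂ ∈ C) (hne : h₂ ≠ h₁)
    (hhit1 : g (flipBlock x (insert h₁ B)) = false)
    {S : Finset ι} (hSC : S ⊆ C) (hmiss : ∀ u ∈ S, g (flipBlock x (insert u B)) = true)
    (h1S : h₁ ∉ S) (h2S : h₂ ∉ S) :
    g (flipBlock x (insert h₂ (insert h₁ (B ∪ S)))) = false := by
  have hq : g (flipBlock x (insert h₁ (B ∪ S))) = false :=
    chainW g x hR hB hd h1C hhit1 S hSC hmiss h1S
  have hh1B : h₁ ∉ B := Finset.disjoint_right.mp hd h1C
  have hh2B : h₂ ∉ B := Finset.disjoint_right.mp hd h2C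
  have hh1q : h₁ ∉ B ∪ S := by
    simp only [Finset.mem_union]; rintro (hc | hc) <;> [exact hh1B hc; exact h1S hc]
  have h1' : g (flipBit (flipBlock x (insert h₁ (B ∪ S))) h₁) = true := by
    rw [flipBit_flipBlock_mem x (Finset.mem_insert_self h₁ _), Finset.erase_insert hh1q]
    exact chainZ g x hR hB hd S hSC hmiss
  by_contra hcon
  have htrue : g (flipBlock x (insert h₂ (insert h₁ (B ∪ S)))) = true := by
    revert hcon; cases g (flipBlock x (insert h₂ (insert h₁ (B ∪ S)))) <;> simp
  have h2q : h₂ ∉ insert h₁ (B ∪ S) := by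
    simp only [Finset.mem_insert, Finset.mem_union]
    rintro (hc | hc | hc)
    · exact hne hc
    · exact hh2B hc
    · exact h2S hc
  have h2' : g (flipBit (flipBlock x (insert h₁ (B ∪ S))) h₂) = true := by
    rw [flipBit_flipBlock_notMem x h2q]; exact htrue
  exact hne (unique_dir g hR hq h2' h1')

lemma chainX (hR : ∀ z, g z = false → sensAt g z ≤ 1) (hC : MinBlock g x C) (hd : Disjoint B C) :
    ∀ T : Finset ι, T ⊆ B → (∀ v ∈ T, g (flipBlock x (insert v C)) = true) →
      ∀ t ∈ C, g (flipBlock x ((C.erase t) ∪ T)) = false := by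
  intro T
  induction T using Finset.strongInduction with
  | _ T ih =>
    intro hTB hmiss t ht
    rcases T.eq_empty_or_nonempty with rfl | hne
    · rw [Finset.union_empty]
      exact hC.2 _ (Finset.erase_ssubset ht)
    · obtain ⟨v, hv⟩ := hne
      have hvB : v ∈ B := hTB hv
      have hvC : v ∉ C := Finset.disjoint_left.mp hd hvB
      have htB : t ∉ B := Finset.disjoint_right.mp hd ht
      have hq : g (flipBlock x ((C.erase t) ∪ T.erase v)) = false :=
        ih (T.erase v) (Finset.erase_ssubset hv) ((T.erase_subset v).trans hTB)
          (fun w hw => hmiss w (T.erase_subset v hw)) t ht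
      have htq : t ∉ (C.erase t) ∪ T.erase v := by
        simp only [Finset.mem_union, Finset.mem_erase]
        rintro (⟨hc, -⟩ | ⟨-, hc⟩) <;> [exact hc rfl; exact htB (hTB hc)]
      have h1 : g (flipBit (flipBlock x ((C.erase t) ∪ T.erase v)) t) = true := by
        rw [flipBit_flipBlock_notMem x htq, ← Finset.insert_union, Finset.insert_erase ht]
        exact chainZ g x hR hC hd.symm (T.erase v) ((T.erase_subset v).trans hTB)
          (fun w hw => hmiss w (T.erase_subset v hw))
      by_contra hcon
      have htrue : g (flipBlock x ((C.erase t) ∪ T)) = true := by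
        revert hcon; cases g (flipBlock x ((C.erase t) ∪ T)) <;> simp
      have hvq : v ∉ (C.erase t) ∪ T.erase v := by
        simp only [Finset.mem_union, Finset.mem_erase]
        rintro (⟨-, hc⟩ | ⟨hc, -⟩) <;> [exact hvC hc; exact hc rfl]
      have h2 : g (flipBit (flipBlock x ((C.erase t) ∪ T.erase v)) v) = true := by
        rw [flipBit_flipBlock_notMem x hvq]
        have : insert v ((C.erase t) ∪ T.erase v) = (C.erase t) ∪ T := by
          ext j
          simp only [Finset.mem_insert, Finset.mem_union, Finset.mem_erase]
          by_cases hj : j = v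
          · subst hj; simp [hv]
          · simp [hj]; try tauto
        rw [this]; exact htrue
      have : v = t := unique_dir g hR hq h2 h1
      exact hvC (this ▸ ht)

end C

section B
variable {ι : Type} [Fintype ι] [DecidableEq ι] (g : (ι → Bool) → Bool) (x : ι → Bool)

lemma exists_minBlock {B : Finset ι} (hB : g (flipBlock x B) = true) :
    ∃ B' ⊆ B, MinBlock g x B' := by
  classical
  induction B using Finset.strongInduction with
  | _ B ih =>
    by_cases h : ∀ S ⊂ B, g (flipBlock x S) = false
    · exact ⟨B, Finset.Subset.refl B, hB, h⟩
    · push_neg at h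
      obtain ⟨S, hSB, hS⟩ := h
      have hS' : g (flipBlock x S) = true := by
        revert hS; cases g (flipBlock x S) <;> simp
      obtain ⟨B', hB'S, hB'⟩ := ih S hSB hS'
      exact ⟨B', hB'S.trans hSB.subset, hB'⟩

lemma minBlock_nonempty (hx : g x = false) {B : Finset ι} (hB : MinBlock g x B) :
    B.Nonempty := by
  rcases B.eq_empty_or_nonempty with h | h
  · exfalso
    have h1 := hB.1
    rw [h, flipBlock_empty] at h1
    rw [h1] at hx; exact Bool.noConfusion hx
  · exact h

end B
section P
variable {ι : Type} [Fintype ι] [DecidableEq ι] (g : (ι → Bool) → Bool) (x : ι → Bool)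

/-- hits of block `B` inside `C`. -/
def hitsIn (B C : Finset ι) : Finset ι :=
  C.filter fun u => g (flipBlock x (insert u B)) = false

variable {B C : Finset ι}

lemma miss_of {u : ι} (hu : u ∈ C) (hnot : u ∉ hitsIn g x B C) :
    g (flipBlock x (insert u B)) = true := by
  simp only [hitsIn, Finset.mem_filter] at hnot
  rcases Bool.eq_false_or_eq_true (g (flipBlock x (insert u B))) with h | h
  · exact h
  · exact absurd ⟨hu, h⟩ hnot

lemma sideTrue (hR : ∀ z, g z = false → sensAt g z ≤ 1) (hB : MinBlock g x B)
    (hd : Disjoint B C) (h0 : hitsIn g x B C = ∅) :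
    g (flipBlock x (B ∪ C)) = true :=
  chainZ g x hR hB hd C (Finset.Subset.refl C)
    (fun u hu => miss_of g x hu (by rw [h0]; exact Finset.notMem_empty u))

lemma sideFalse (hR : ∀ z, g z = false → sensAt g z ≤ 1) (hB : MinBlock g x B)
    (hd : Disjoint B C) (h1 : 1 ≤ (hitsIn g x B C).card) (h2 : (hitsIn g x B C).card ≤ 2) :
    g (flipBlock x (B ∪ C)) = false := by
  have hsub : hitsIn g x B C ⊆ C := Finset.filter_subset _ _
  have hcases : (hitsIn g x B C).card = 1 ∨ (hitsIn g x B C).card = 2 := by omega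
  rcases hcases with hc | hc
  · obtain ⟨h, hh⟩ := Finset.card_eq_one.mp hc
    have hmem : h ∈ hitsIn g x B C := hh ▸ Finset.mem_singleton_self h
    have hhC : h ∈ C := hsub hmem
    have hhit : g (flipBlock x (insert h B)) = false := (Finset.mem_filter.mp hmem).2
    have key := chainW g x hR hB hd hhC hhit (C.erase h) (C.erase_subset h)
      (fun u hu => miss_of g x (C.erase_subset h hu)
        (by rw [hh]; simp only [Finset.mem_singleton]; exact (Finset.mem_erase.mp hu).1))
      (Finset.notMem_erase h C)
    rwa [← Finset.union_insert, Finset.insert_erase hhC] at key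
  · obtain ⟨h₁, h₂, hne, hh⟩ := Finset.card_eq_two.mp hc
    have h1m : h₁ ∈ hitsIn g x B C := hh ▸ by simp
    have h2m : h₂ ∈ hitsIn g x B C := hh ▸ by simp
    have h1C : h₁ ∈ C := hsub h1m
    have h2C : h₂ ∈ C := hsub h2m
    have hhit1 : g (flipBlock x (insert h₁ B)) = false := (Finset.mem_filter.mp h1m).2
    have hmiss : ∀ u ∈ (C.erase h₁).erase h₂, g (flipBlock x (insert u B)) = true := by
      intro u hu
      rw [Finset.mem_erase, Finset.mem_erase] at hu
      exact miss_of g x hu.2.2 (by rw [hh]; simp [hu.1, hu.2.1])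
    have h1S : h₁ ∉ (C.erase h₁).erase h₂ := by simp [Finset.mem_erase]
    have h2S : h₂ ∉ (C.erase h₁).erase h₂ := by simp [Finset.mem_erase]
    have key := chainW2 g x hR hB hd h1C h2C hne.symm hhit1
      ((Finset.erase_subset _ _).trans (C.erase_subset h₁)) hmiss h1S h2S
    have hid : insert h₂ (insert h₁ (B ∪ (C.erase h₁).erase h₂)) = B ∪ C := by
      rw [← Finset.union_insert, ← Finset.union_insert, Finset.erase_right_comm,
        Finset.insert_erase (Finset.mem_erase.mpr ⟨hne, h1C⟩), Finset.insert_erase h2C]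
    rwa [hid] at key

lemma pair3 (hR : ∀ z, g z = false → sensAt g z ≤ 1) (hx : g x = false)
    (hB : MinBlock g x B) (hC : MinBlock g x C) (hd : Disjoint B C) :
    3 ≤ (hitsIn g x B C).card + (hitsIn g x C B).card := by
  by_contra hcon
  push_neg at hcon
  have h2 : (hitsIn g x B C).card + (hitsIn g x C B).card ≤ 2 := by omega
  have hCne : C.Nonempty := minBlock_nonempty g x hx hC
  rcases Nat.eq_zero_or_pos (hitsIn g x B C).card with haz | hapos
  · have hBCempty : hitsIn g x B C = ∅ := Finset.card_eq_zero.mp haz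
    rcases Nat.eq_zero_or_pos (hitsIn g x C B).card with hcz | hcpos
    · have hCBempty : hitsIn g x C B = ∅ := Finset.card_eq_zero.mp hcz
      obtain ⟨t, ht⟩ := hCne
      have f1 : g (flipBlock x ((C.erase t) ∪ B)) = false :=
        chainX g x hR hC hd B (Finset.Subset.refl B)
          (fun v hv => miss_of g x hv (by rw [hCBempty]; exact Finset.notMem_empty v)) t ht
      have f2 : g (flipBlock x (B ∪ C.erase t)) = true :=
        chainZ g x hR hB hd (C.erase t) (C.erase_subset t)
          (fun u hu => miss_of g x (C.erase_subset t hu)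
            (by rw [hBCempty]; exact Finset.notMem_empty u))
      rw [Finset.union_comm] at f1
      rw [f2] at f1
      exact Bool.noConfusion f1
    · have f1 : g (flipBlock x (C ∪ B)) = false :=
        sideFalse g x hR hC hd.symm hcpos (by omega)
      have f2 : g (flipBlock x (B ∪ C)) = true := sideTrue g x hR hB hd hBCempty
      rw [Finset.union_comm, f2] at f1
      exact Bool.noConfusion f1
  · rcases Nat.eq_zero_or_pos (hitsIn g x C B).card with hcz | hcpos
    · have hCBempty : hitsIn g x C B = ∅ := Finset.card_eq_zero.mp hcz
      have f1 : g (flipBlock x (B ∪ C)) = false :=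
        sideFalse g x hR hB hd hapos (by omega)
      have f2 : g (flipBlock x (C ∪ B)) = true := sideTrue g x hR hC hd.symm hCBempty
      rw [Finset.union_comm, f2] at f1
      exact Bool.noConfusion f1
    · -- both exactly 1
      have ha1 : (hitsIn g x B C).card = 1 := by omega
      have hc1 : (hitsIn g x C B).card = 1 := by omega
      obtain ⟨h, hh⟩ := Finset.card_eq_one.mp ha1
      obtain ⟨e, he⟩ := Finset.card_eq_one.mp hc1
      have hmem : h ∈ hitsIn g x B C := hh ▸ Finset.mem_singleton_self h
      have emem : e ∈ hitsIn g x C B := he ▸ Finset.mem_singleton_self e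
      have hhC : h ∈ C := (Finset.filter_subset _ _) hmem
      have heB : e ∈ B := (Finset.filter_subset _ _) emem
      have hq : g (flipBlock x (B ∪ C)) = false :=
        sideFalse g x hR hB hd hapos (by omega)
      have d1 : g (flipBit (flipBlock x (B ∪ C)) h) = true := by
        rw [flipBit_flipBlock_mem x (Finset.mem_union_right B hhC),
          Finset.erase_union_distrib,
          Finset.erase_eq_of_notMem (Finset.disjoint_right.mp hd hhC)]
        exact chainZ g x hR hB hd (C.erase h) (C.erase_subset h)
          (fun u hu => miss_of g x (C.erase_subset h hu)
            (by rw [hh]; simp only [Finset.mem_singleton]; exact (Finset.mem_erase.mp hu).1))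
      have d2 : g (flipBit (flipBlock x (B ∪ C)) e) = true := by
        rw [flipBit_flipBlock_mem x (Finset.mem_union_left C heB),
          Finset.erase_union_distrib,
          Finset.erase_eq_of_notMem (fun hc => (Finset.disjoint_left.mp hd heB) hc),
          Finset.union_comm]
        exact chainZ g x hR hC hd.symm (B.erase e) (B.erase_subset e)
          (fun v hv => miss_of g x (B.erase_subset e hv)
            (by rw [he]; simp only [Finset.mem_singleton]; exact (Finset.mem_erase.mp hv).1))
      have : h = e := unique_dir g hR hq d1 d2
      exact (Finset.disjoint_left.mp hd heB) (this ▸ hhC)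

end P

section D
variable {ι : Type} [Fintype ι] [DecidableEq ι] (g : (ι → Bool) → Bool) (x : ι → Bool)

lemma count_at (hx : g x = false) {b : ℕ} (Bl : Fin b → Finset ι)
    (hdisj : Pairwise fun p q => Disjoint (Bl p) (Bl q))
    (hmin : ∀ p, MinBlock g x (Bl p)) (p : Fin b) :
    (Bl p).card + ∑ q ∈ Finset.univ.erase p, (hitsIn g x (Bl p) (Bl q)).card
      ≤ sensAt g (flipBlock x (Bl p)) := by
  classical
  have hsubq : ∀ q, hitsIn g x (Bl p) (Bl q) ⊆ Bl q := fun q => Finset.filter_subset _ _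
  have hdisjT : Disjoint (Bl p) ((Finset.univ.erase p).biUnion fun q => hitsIn g x (Bl p) (Bl q)) := by
    rw [Finset.disjoint_biUnion_right]
    intro q hq
    exact ((hdisj (Finset.mem_erase.mp hq).1.symm).mono_right (hsubq q))
  have hcardbi : ((Finset.univ.erase p).biUnion fun q => hitsIn g x (Bl p) (Bl q)).card
      = ∑ q ∈ Finset.univ.erase p, (hitsIn g x (Bl p) (Bl q)).card := by
    apply Finset.card_biUnion
    intro q hq q' hq' hne
    exact ((hdisj hne).mono (hsubq q) (hsubq q'))
  have hcard : ((Bl p) ∪ (Finset.univ.erase p).biUnion fun q => hitsIn g x (Bl p) (Bl q)).card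
      = (Bl p).card + ∑ q ∈ Finset.univ.erase p, (hitsIn g x (Bl p) (Bl q)).card := by
    rw [Finset.card_union_of_disjoint hdisjT, hcardbi]
  rw [← hcard]
  unfold sensAt
  apply Finset.card_le_card
  intro i hi
  simp only [Finset.mem_filter, Finset.mem_univ, true_and]
  rcases Finset.mem_union.mp hi with hiB | hiU
  · rw [flipBit_flipBlock_mem x hiB, (hmin p).2 _ (Finset.erase_ssubset hiB), (hmin p).1]
    simp
  · obtain ⟨q, hq, hiq⟩ := Finset.mem_biUnion.mp hiU
    have hiBq : i ∈ Bl q := hsubq q hiq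
    have hiBp : i ∉ Bl p :=
      Finset.disjoint_right.mp (hdisj (Finset.mem_erase.mp hq).1.symm) hiBq
    rw [flipBit_flipBlock_notMem x hiBp, (Finset.mem_filter.mp hiq).2, (hmin p).1]
    simp

lemma main_bound (hR : ∀ z, g z = false → sensAt g z ≤ 1) (hx : g x = false) {b : ℕ}
    (Bl : Fin b → Finset ι)
    (hdisj : Pairwise fun p q => Disjoint (Bl p) (Bl q))
    (hflip : ∀ p, g (flipBlock x (Bl p)) = true) :
    3 * b ≤ 2 * sens1 g + 3 := by
  classical
  rcases Nat.eq_zero_or_pos b with rfl | hb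
  · omega
  obtain ⟨k, rfl⟩ : ∃ k, b = k + 1 := ⟨b - 1, by omega⟩
  choose Bl' hsub hmin using fun p => exists_minBlock g x (hflip p)
  have hdisj' : Pairwise fun p q => Disjoint (Bl' p) (Bl' q) :=
    fun p q hne => ((hdisj hne).mono (hsub p) (hsub q))
  set s₁ := sens1 g with hs₁
  set t : Fin (k+1) → Fin (k+1) → ℕ :=
    fun p q => (hitsIn g x (Bl' p) (Bl' q)).card with ht
  have hA : ∀ p, 1 + ∑ q ∈ Finset.univ.erase p, t p q ≤ s₁ := by
    intro p
    have h1 : 1 ≤ (Bl' p).card :=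
      Finset.card_pos.mpr (minBlock_nonempty g x hx (hmin p))
    have h2 : (Bl' p).card + ∑ q ∈ Finset.univ.erase p, t p q
        ≤ sensAt g (flipBlock x (Bl' p)) := count_at g x hx Bl' hdisj' hmin p
    have h3 : sensAt g (flipBlock x (Bl' p)) ≤ s₁ := by
      apply Finset.le_sup
      simp only [Finset.mem_filter, Finset.mem_univ, true_and]
      exact (hmin p).1
    omega
  have hAsum : (k+1) + ∑ p, ∑ q ∈ Finset.univ.erase p, t p q ≤ (k+1) * s₁ := by
    have := Finset.sum_le_sum (fun p (_ : p ∈ Finset.univ) => hA p)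
    rw [Finset.sum_add_distrib] at this
    simpa [Finset.sum_const, Finset.card_univ, mul_comm] using this
  have hswap : (∑ p, ∑ q ∈ Finset.univ.erase p, t q p)
      = ∑ p, ∑ q ∈ Finset.univ.erase p, t p q := by
    rw [Finset.sum_comm' (s' := fun q => Finset.univ.erase q) (t' := Finset.univ)]
    intro p q
    simp only [Finset.mem_erase, Finset.mem_univ, and_true, true_and]
    exact ⟨fun h => h.symm, fun h => h.symm⟩
  have hpair : ∀ p, ∀ q ∈ Finset.univ.erase p, 3 ≤ t p q + t q p := by
    intro p q hq
    have hne : q ≠ p := (Finset.mem_erase.mp hq).1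
    exact pair3 g x hR hx (hmin p) (hmin q) (hdisj' hne.symm)
  have hB : (k+1) * (3 * k) ≤ 2 * ∑ p, ∑ q ∈ Finset.univ.erase p, t p q := by
    have h1 : ∀ p, (3 * k : ℕ) ≤ ∑ q ∈ Finset.univ.erase p, (t p q + t q p) := by
      intro p
      calc (3 * k : ℕ) = ∑ _q ∈ Finset.univ.erase p, 3 := by
            rw [Finset.sum_const, Finset.card_erase_of_mem (Finset.mem_univ p),
              Finset.card_univ, Fintype.card_fin]
            simp [mul_comm]
        _ ≤ _ := Finset.sum_le_sum (fun q hq => hpair p q hq)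
    have h2 : (k+1) * (3 * k) ≤ ∑ p, ∑ q ∈ Finset.univ.erase p, (t p q + t q p) := by
      calc (k+1) * (3*k) = ∑ _p : Fin (k+1), (3*k) := by
            simp [Finset.sum_const, Finset.card_univ, mul_comm]
        _ ≤ _ := Finset.sum_le_sum (fun p _ => h1 p)
    calc (k+1) * (3 * k) ≤ ∑ p, ∑ q ∈ Finset.univ.erase p, (t p q + t q p) := h2
      _ = (∑ p, ∑ q ∈ Finset.univ.erase p, t p q)
          + ∑ p, ∑ q ∈ Finset.univ.erase p, t q p := by
            rw [← Finset.sum_add_distrib]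
            congr 1
            funext p
            rw [Finset.sum_add_distrib]
      _ = 2 * ∑ p, ∑ q ∈ Finset.univ.erase p, t p q := by rw [hswap]; ring
  have hdiv : 2 + 3 * k ≤ 2 * s₁ := by
    have hmul : (k+1) * (2 + 3 * k) ≤ (k+1) * (2 * s₁) := by nlinarith
    exact Nat.le_of_mul_le_mul_left hmul (Nat.succ_pos k)
  omega

end D

section E
variable {ι : Type} [Fintype ι] [DecidableEq ι] (f : (ι → Bool) → Bool) (x : ι → Bool)

def bsSet : Set ℕ := {b : ℕ | ∃ Bl : Fin b → Finset ι,
    (Pairwise fun p q => Disjoint (Bl p) (Bl q)) ∧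
    ∀ p, f (flipBlock x (Bl p)) ≠ f x}

lemma bsSet_zero : 0 ∈ bsSet f x :=
  ⟨Fin.elim0, fun p => p.elim0, fun p => p.elim0⟩

lemma bsSet_bdd : BddAbove (bsSet f x) := by
  refine ⟨Fintype.card ι, fun b hb => ?_⟩
  obtain ⟨Bl, hdisj, hflip⟩ := hb
  have hne : ∀ p, (Bl p).Nonempty := by
    intro p
    rcases (Bl p).eq_empty_or_nonempty with h | h
    · exfalso; apply hflip p; rw [h, flipBlock_empty]
    · exact h
  choose el hel using hne
  have hinj : Function.Injective el := by
    intro p q hpq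
    by_contra hne'
    exact Finset.disjoint_left.mp (hdisj hne') (hel p) (hpq ▸ hel q)
  simpa using Fintype.card_le_of_injective el hinj

lemma bsAt_mem : bsAt f x ∈ bsSet f x :=
  Nat.sSup_mem ⟨0, bsSet_zero f x⟩ (bsSet_bdd f x)

lemma le_bsAt {b : ℕ} (hb : b ∈ bsSet f x) : b ≤ bsAt f x :=
  le_csSup (bsSet_bdd f x) hb

lemma bsAt_le_bs0 (hx : f x = false) : bsAt f x ≤ bs0 f := by
  apply Finset.le_sup
  simp only [Finset.mem_filter, Finset.mem_univ, true_and]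
  exact hx

end E

section F
variable {n m : ℕ} (g : (Fin m → Bool) → Bool) (f : (Fin n × Fin m → Bool) → Bool)

/-- projection of a block in the product to copy `i`. -/
def projBlock (i : Fin n) (B : Finset (Fin n × Fin m)) : Finset (Fin m) :=
  (B.filter fun z => z.1 = i).image Prod.snd

lemma mem_projBlock {i : Fin n} {B : Finset (Fin n × Fin m)} {j : Fin m} :
    j ∈ projBlock i B ↔ (i, j) ∈ B := by
  simp only [projBlock, Finset.mem_image, Finset.mem_filter]
  constructor
  · rintro ⟨⟨a, b⟩, ⟨hzB, rfl⟩, rfl⟩; exact hzB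
  · intro h; exact ⟨(i, j), ⟨h, rfl⟩, rfl⟩

lemma flip_proj (x : Fin n × Fin m → Bool) (B : Finset (Fin n × Fin m)) (i : Fin n) :
    (fun j => (flipBlock x B) (i, j)) = flipBlock (fun j => x (i, j)) (projBlock i B) := by
  funext j
  simp only [flipBlock]
  by_cases h : (i, j) ∈ B
  · rw [if_pos h, if_pos (mem_projBlock.mpr h)]
  · rw [if_neg h, if_neg (fun hc => h (mem_projBlock.mp hc))]

lemma projBlock_prod (i : Fin n) (S : Finset (Fin m)) :
    projBlock i ({i} ×ˢ S) = S := by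
  ext j
  rw [mem_projBlock, Finset.mem_product]
  simp

lemma fFalseIff (hf : ∀ x : Fin n × Fin m → Bool,
      f x = true ↔ ∃ i : Fin n, g (fun j => x (i, j)) = true)
    (x : Fin n × Fin m → Bool) :
    f x = false ↔ ∀ i, g (fun j => x (i, j)) = false := by
  constructor
  · intro h i
    rcases Bool.eq_false_or_eq_true (g (fun j => x (i, j))) with h' | h'
    · rw [(hf x).mpr ⟨i, h'⟩] at h; exact Bool.noConfusion h
    · exact h'
  · intro h
    rcases Bool.eq_false_or_eq_true (f x) with h' | h'
    · obtain ⟨i, hi⟩ := (hf x).mp h'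
      rw [h i] at hi; exact Bool.noConfusion hi
    · exact h'

lemma comp_ge (hf : ∀ x : Fin n × Fin m → Bool,
      f x = true ↔ ∃ i : Fin n, g (fun j => x (i, j)) = true)
    (hg0 : ∃ y, g y = false) : n * bs0 g ≤ bs0 f := by
  classical
  obtain ⟨y₀, hy₀⟩ := hg0
  have hne : (Finset.univ.filter fun y => g y = false).Nonempty :=
    ⟨y₀, by simp [hy₀]⟩
  obtain ⟨x₀, hx₀mem, hx₀⟩ := Finset.exists_mem_eq_sup _ hne (bsAt g)
  have hgx₀ : g x₀ = false := (Finset.mem_filter.mp hx₀mem).2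
  have hbs0 : bs0 g = bsAt g x₀ := hx₀
  rw [hbs0]
  obtain ⟨Bl, hdisj, hflip⟩ := bsAt_mem g x₀
  set X : Fin n × Fin m → Bool := fun z => x₀ z.2 with hX
  have hfX : f X = false := (fFalseIff g f hf X).mpr (fun i => hgx₀)
  have hmem : n * bsAt g x₀ ∈ bsSet f X := by
    refine ⟨fun r => {(finProdFinEquiv.symm r).1} ×ˢ Bl (finProdFinEquiv.symm r).2, ?_, ?_⟩
    · intro r r' hrr'
      have hzz : finProdFinEquiv.symm r ≠ finProdFinEquiv.symm r' :=
        fun h => hrr' (finProdFinEquiv.symm.injective h)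
      rw [Finset.disjoint_left]
      rintro ⟨a, c⟩ hmem1 hmem2
      rw [Finset.mem_product, Finset.mem_singleton] at hmem1 hmem2
      by_cases h1 : (finProdFinEquiv.symm r).1 = (finProdFinEquiv.symm r').1
      · have h2 : (finProdFinEquiv.symm r).2 ≠ (finProdFinEquiv.symm r').2 := by
          intro h2; exact hzz (Prod.ext h1 h2)
        exact Finset.disjoint_left.mp (hdisj h2) hmem1.2 hmem2.2
      · exact h1 (hmem1.1.symm.trans hmem2.1)
    · intro r
      rw [hfX]
      have hgoal : f (flipBlock X ({(finProdFinEquiv.symm r).1} ×ˢ Bl (finProdFinEquiv.symm r).2)) = true := by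
        rw [hf]
        refine ⟨(finProdFinEquiv.symm r).1, ?_⟩
        rw [flip_proj, projBlock_prod]
        have hflip' := hflip (finProdFinEquiv.symm r).2
        rw [hgx₀] at hflip'
        have hXi : (fun j => X ((finProdFinEquiv.symm r).1, j)) = x₀ := rfl
        rw [hXi]
        revert hflip'
        cases g (flipBlock x₀ (Bl (finProdFinEquiv.symm r).2)) <;> simp
      rw [hgoal]; simp
  exact le_trans (le_bsAt f X hmem) (bsAt_le_bs0 f X hfX)

lemma comp_le (hf : ∀ x : Fin n × Fin m → Bool,
      f x = true ↔ ∃ i : Fin n, g (fun j => x (i, j)) = true) :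
    bs0 f ≤ n * bs0 g := by
  classical
  apply Finset.sup_le
  intro X hX
  have hfX : f X = false := (Finset.mem_filter.mp hX).2
  obtain ⟨Bl, hdisj, hflip⟩ := bsAt_mem f X
  have hcopy : ∀ i, g (fun j => X (i, j)) = false := (fFalseIff g f hf X).mp hfX
  have hex : ∀ p : Fin (bsAt f X), ∃ i, g (fun j => (flipBlock X (Bl p)) (i, j)) = true := by
    intro p
    apply (hf _).mp
    have hne := hflip p
    rw [hfX] at hne
    revert hne; cases f (flipBlock X (Bl p)) <;> simp
  choose I hI using hex
  have hfiber : ∀ i : Fin n,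
      (Finset.univ.filter fun p => I p = i).card ≤ bs0 g := by
    intro i
    have hmem : (Finset.univ.filter fun p => I p = i).card
        ∈ bsSet g (fun j => X (i, j)) := by
      refine ⟨fun r => projBlock i
        (Bl ((Finset.univ.filter fun p => I p = i).orderIsoOfFin rfl r)), ?_, ?_⟩
      · intro r r' hrr'
        have hner : (((Finset.univ.filter fun p => I p = i).orderIsoOfFin rfl r : _) : Fin (bsAt f X))
            ≠ ((Finset.univ.filter fun p => I p = i).orderIsoOfFin rfl r' : _) := by
          intro h
          exact hrr' (((Finset.univ.filter fun p => I p = i).orderIsoOfFin rfl).injective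
            (Subtype.ext h))
        rw [Finset.disjoint_left]
        intro j hj hj'
        rw [mem_projBlock] at hj hj'
        exact Finset.disjoint_left.mp (hdisj hner) hj hj'
      · intro r
        rw [hcopy i, ← flip_proj]
        have hIe : I (((Finset.univ.filter fun p => I p = i).orderIsoOfFin rfl r : _) : Fin (bsAt f X)) = i :=
          (Finset.mem_filter.mp ((Finset.univ.filter fun p => I p = i).orderIsoOfFin rfl r).2).2
        have h1 := hI (((Finset.univ.filter fun p => I p = i).orderIsoOfFin rfl r : _) : Fin (bsAt f X))
        rw [hIe] at h1
        rw [h1]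
        simp
    calc (Finset.univ.filter fun p => I p = i).card
        ≤ bsAt g (fun j => X (i, j)) := le_bsAt _ _ hmem
      _ ≤ bs0 g := bsAt_le_bs0 _ _ (hcopy i)
  have hsum : bsAt f X = ∑ i : Fin n, (Finset.univ.filter fun p => I p = i).card := by
    have hcf := Finset.card_eq_sum_card_fiberwise
      (f := I) (s := Finset.univ) (t := Finset.univ) (fun p _ => Finset.mem_univ (I p))
    rw [Finset.card_univ, Fintype.card_fin] at hcf
    exact hcf
  calc bsAt f X = ∑ i : Fin n, (Finset.univ.filter fun p => I p = i).card := hsum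
    _ ≤ ∑ _i : Fin n, bs0 g := Finset.sum_le_sum (fun i _ => hfiber i)
    _ = n * bs0 g := by simp [Finset.sum_const, mul_comm]

end F

/-- If `g : {0,1}^m → {0,1}` (attaining both values) has `s₀(g) = 1`, and `f` is the OR
of `n = s₁(g)` disjoint copies of `g`, then `bs₀(f) = s₁(g)·bs₀(g) ≤ s₁(g)·((2/3)·s₁(g)+1)`,
the inequality being stated over ℕ as `3·bs₀(f) ≤ s₁(g)·(2·s₁(g)+3)`. -/
theorem bs0_composed_le_of_sens0_eq_one {m : ℕ} (g : (Fin m → Bool) → Bool)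
    (hg0 : ∃ y, g y = false) (hg1 : ∃ y, g y = true)
    (hs0 : sens0 g = 1)
    (f : (Fin (sens1 g) × Fin m → Bool) → Bool)
    (hf : ∀ x : Fin (sens1 g) × Fin m → Bool,
      f x = true ↔ ∃ i : Fin (sens1 g), g (fun j => x (i, j)) = true) :
    bs0 f = sens1 g * bs0 g ∧ 3 * bs0 f ≤ sens1 g * (2 * sens1 g + 3) := by
  classical
  have hR : ∀ z, g z = false → sensAt g z ≤ 1 := by
    intro z hz
    have hle : sensAt g z ≤ sens0 g := by
      apply Finset.le_sup
      simp only [Finset.mem_filter, Finset.mem_univ, true_and]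
      exact hz
    rw [hs0] at hle
    exact hle
  have hscalar : 3 * bs0 g ≤ 2 * sens1 g + 3 := by
    obtain ⟨y₀, hy₀⟩ := hg0
    have hne : (Finset.univ.filter fun y => g y = false).Nonempty := ⟨y₀, by simp [hy₀]⟩
    obtain ⟨x₀, hx₀mem, hx₀⟩ := Finset.exists_mem_eq_sup _ hne (bsAt g)
    have hgx₀ : g x₀ = false := (Finset.mem_filter.mp hx₀mem).2
    obtain ⟨Bl, hdisj, hflip⟩ := bsAt_mem g x₀
    have hflip' : ∀ p, g (flipBlock x₀ (Bl p)) = true := by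
      intro p
      have hp := hflip p
      rw [hgx₀] at hp
      revert hp; cases g (flipBlock x₀ (Bl p)) <;> simp
    have hmb := main_bound g x₀ hR hgx₀ Bl hdisj hflip'
    rw [show bs0 g = bsAt g x₀ from hx₀]
    exact hmb
  have heq : bs0 f = sens1 g * bs0 g :=
    le_antisymm (comp_le g f hf) (comp_ge g f hf hg0)
  refine ⟨heq, ?_⟩
  calc 3 * bs0 f = sens1 g * (3 * bs0 g) := by rw [heq]; ring
    _ ≤ sens1 g * (2 * sens1 g + 3) := mul_le_mul_right hscalar (sens1 g)
end
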